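/- Let u : Ω × A → ℝ satisfy u(·,α) ∈ L^p(μ) for every α ∈ A. Then for every ε > 0 there exists δ > 0 such that: for every v : Ω × A → ℝ with v(·,α) ∈ L^p(μ) for every α ∈ A and with 0 < ∑_{α∈A} ‖v(·,α)‖_{L^p(μ)} ≤ δ, and for every measurable function α_v : Ω → A satisfying u(x,α_v(x)) + v(x,α_v(x)) = max_{α∈A} (u(x,α) + v(x,α)) for μ-a.e. x ∈ Ω, one has ‖F₂(u+v) − F₂(u) − v(·, α_v(·))‖_{L²(μ)} ≤ ε · ∑_{α∈A} ‖v(·,α)‖_{L^p(μ)}. (That is, the pointwise maximum operator F₂ from (L^p(μ))^{|A|} to L²(μ) is semismooth with generalized differential v ↦ v(·, α_v(·)).) -/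

import Mathlib

open MeasureTheory Filter
open scoped ENNReal NNReal Topology

lemma stmt9_exists_eq_ciSup {A : Type*} [Fintype A] [Nonempty A] (f : A → ℝ) :
    ∃ α, f α = ⨆ β, f β := by
  obtain ⟨α, hα⟩ := Finite.exists_max f
  exact ⟨α, le_antisymm (le_ciSup (Set.Finite.bddAbove (Set.finite_range f)) α) (ciSup_le hα)⟩

lemma stmt9_key_pt {A : Type*} [Fintype A] [Nonempty A] (U V : A → ℝ) (γ : A)
    (hγ : U γ + V γ = ⨆ α, (U α + V α)) :
    (⨆ α, (U α + V α)) - (⨆ α, U α) - V γ = U γ - (⨆ α, U α) ∧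
    ∃ β, U β = (⨆ α, U α) ∧ 0 ≤ U β - U γ ∧ U β - U γ ≤ 2 * ∑ α, |V α| := by
  obtain ⟨β, hβ⟩ := stmt9_exists_eq_ciSup U
  have h1 : U β + V β ≤ U γ + V γ := by
    rw [hγ]
    exact le_ciSup (f := fun α => U α + V α) (Set.Finite.bddAbove (Set.finite_range _)) β
  have habs : ∀ α, |V α| ≤ ∑ α, |V α| := fun α =>
    Finset.single_le_sum (f := fun α => |V α|) (fun _ _ => abs_nonneg _) (Finset.mem_univ α)
  have hγle : U γ ≤ ⨆ α, U α := le_ciSup (Set.Finite.bddAbove (Set.finite_range U)) γ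
  refine ⟨by rw [← hγ]; ring, β, hβ, by linarith [hβ], ?_⟩
  have h2 : V γ ≤ |V γ| := le_abs_self _
  have h3 : -|V β| ≤ V β := neg_abs_le _
  linarith [habs γ, habs β]

lemma stmt9_meas_ciSup {A : Type*} [Fintype A] [Nonempty A] {X : Type*} [MeasurableSpace X]
    {f : A → X → ℝ} (hf : ∀ α, Measurable (f α)) :
    Measurable fun x => ⨆ α, f α x := by
  have h := Finset.measurable_sup' (Finset.univ_nonempty (α := A))
    (f := fun α => f α) (fun α _ => hf α)
  convert h using 1
  ext x
  rw [Finset.sup'_apply, Finset.sup'_univ_eq_ciSup]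

/-- Semismoothness of the pointwise maximum operator `F₂ : (L^p(μ))^{|A|} → L²(μ)`,
`F₂(u)(x) = max_α u x α`, on a bounded measurable `Ω ⊆ ℝⁿ` with `μ` the restricted
Lebesgue measure and `p ∈ (2, ∞)`: generalized differentials are given by composition
with measurable maximizing selections `αv` for the perturbed point. -/
theorem stmt9 {n : ℕ} {A : Type*} [Fintype A] [Nonempty A]
    [MeasurableSpace A] [MeasurableSingletonClass A]
    (Ω : Set (Fin n → ℝ)) (hΩmeas : MeasurableSet Ω) (hΩbdd : Bornology.IsBounded Ω)
    (p : ℝ) (hp : 2 < p)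
    (μ : Measure (Fin n → ℝ)) (hμ : μ = volume.restrict Ω)
    (u : (Fin n → ℝ) → A → ℝ)
    (hu : ∀ α : A, MemLp (fun x => u x α) (ENNReal.ofReal p) μ) :
    ∀ ε > (0 : ℝ), ∃ δ > (0 : ℝ),
      ∀ v : (Fin n → ℝ) → A → ℝ,
        (∀ α : A, MemLp (fun x => v x α) (ENNReal.ofReal p) μ) →
        0 < ∑ α : A, (eLpNorm (fun x => v x α) (ENNReal.ofReal p) μ).toReal →
        (∑ α : A, (eLpNorm (fun x => v x α) (ENNReal.ofReal p) μ).toReal) ≤ δ →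
        ∀ αv : (Fin n → ℝ) → A, Measurable αv →
          (∀ᵐ x ∂μ, u x (αv x) + v x (αv x) = ⨆ α : A, (u x α + v x α)) →
          (eLpNorm
              (fun x => (⨆ α : A, (u x α + v x α)) - (⨆ α : A, u x α) - v x (αv x)) 2 μ).toReal
            ≤ ε * ∑ α : A, (eLpNorm (fun x => v x α) (ENNReal.ofReal p) μ).toReal := by
  classical
  intro ε hε
  have hp0 : (0 : ℝ) < p := by linarith
  set q : ℝ≥0∞ := ENNReal.ofReal p with hqdef
  have hqt : q.toReal = p := ENNReal.toReal_ofReal hp0.le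
  have hq0 : q ≠ 0 := by
    simp only [hqdef, ne_eq, ENNReal.ofReal_eq_zero, not_le]; linarith
  have hqtop : q ≠ ∞ := ENNReal.ofReal_ne_top
  have hq2 : (2 : ℝ≥0∞) ≤ q := by
    rw [hqdef, ← ENNReal.ofReal_ofNat]
    exact ENNReal.ofReal_le_ofReal hp.le
  have hq1 : (1 : ℝ≥0∞) ≤ q := le_trans (by norm_num) hq2
  haveI : IsFiniteMeasure μ := ⟨by
    rw [hμ, Measure.restrict_apply_univ]; exact hΩbdd.measure_lt_top⟩
  -- measurable representatives for u
  set u' : A → (Fin n → ℝ) → ℝ := fun α => (hu α).1.mk _ with hu'def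
  have hu'meas : ∀ α, Measurable (u' α) := fun α => (hu α).1.stronglyMeasurable_mk.measurable
  have hu'ae : ∀ᵐ x ∂μ, ∀ α, u x α = u' α x := ae_all_iff.2 fun α => (hu α).1.ae_eq_mk
  -- exponent
  set c : ℝ := 1 / 2 - 1 / p with hcdef
  have hc0 : 0 < c := by
    rw [hcdef]
    have : 1 / p < 1 / 2 := by
      apply one_div_lt_one_div_of_lt <;> linarith
    linarith
  set κ : ℝ≥0∞ := ENNReal.ofReal (ε / 2) ^ c⁻¹ with hκdef
  have hκ0 : κ ≠ 0 := by
    apply (ENNReal.rpow_pos (ENNReal.ofReal_pos.2 (half_pos hε)) ENNReal.ofReal_ne_top).ne'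
  have hκtop : κ ≠ ∞ :=
    ENNReal.rpow_ne_top_of_nonneg (inv_nonneg.2 hc0.le) ENNReal.ofReal_ne_top
  have hκ2 : (0 : ℝ≥0∞) < κ / 2 := ENNReal.half_pos hκ0
  have hκ2top : κ / 2 ≠ ∞ := (ENNReal.div_lt_top hκtop (by norm_num)).ne
  -- gap sets
  set D : A × A → ℕ → Set (Fin n → ℝ) := fun ab k =>
    {x | u' ab.1 x < u' ab.2 x ∧ u' ab.2 x - u' ab.1 x ≤ 1 / (k + 1)} with hDdef
  have hDmeas : ∀ ab k, MeasurableSet (D ab k) := by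
    intro ab k
    exact ((measurableSet_lt (hu'meas ab.1) (hu'meas ab.2)).inter
      (measurableSet_le ((hu'meas ab.2).sub (hu'meas ab.1)) measurable_const))
  have hDtend : ∀ ab : A × A, Tendsto (fun k : ℕ => μ (D ab k)) atTop (𝓝 0) := by
    intro ab
    have hanti : Antitone (D ab) := by
      intro k l hkl x hx
      refine ⟨hx.1, hx.2.trans ?_⟩
      apply one_div_le_one_div_of_le
      · positivity
      · exact_mod_cast by exact_mod_cast Nat.add_le_add_right hkl 1
    have hempty : ⋂ k, D ab k = (∅ : Set (Fin n → ℝ)) := by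
      ext x
      simp only [Set.mem_iInter, Set.mem_empty_iff_false, iff_false, not_forall]
      by_contra h
      push_neg at h
      obtain ⟨k, hk⟩ := exists_nat_one_div_lt (sub_pos.2 (h 0).1)
      exact absurd ((h k).2) (not_le.2 hk)
    have := tendsto_measure_iInter_atTop
      (fun k => (hDmeas ab k).nullMeasurableSet) hanti ⟨0, (measure_lt_top μ _).ne⟩
    rwa [hempty, measure_empty] at this
  have hsumtend : Tendsto (fun k : ℕ => ∑ ab : A × A, μ (D ab k)) atTop (𝓝 0) := by
    have := tendsto_finset_sum (Finset.univ : Finset (A × A))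
      (fun ab _ => hDtend ab)
    simpa using this
  obtain ⟨k0, hk0⟩ := (hsumtend.eventually_lt_const hκ2).exists
  set τ : ℝ := 1 / ((k0 : ℝ) + 1) with hτdef
  have hτ0 : 0 < τ := by positivity
  set Eτ : Set (Fin n → ℝ) := ⋃ ab : A × A, D ab k0 with hEdef
  have hEmeas : MeasurableSet Eτ := MeasurableSet.iUnion fun ab => hDmeas ab k0
  have hEκ : μ Eτ ≤ κ / 2 :=
    le_trans (measure_iUnion_fintype_le μ _) hk0.le
  -- choose δ
  have hκ2tR : 0 < (κ / 2).toReal := ENNReal.toReal_pos hκ2.ne' hκ2top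
  refine ⟨(τ / 2) * ((κ / 2).toReal) ^ (1 / p), by positivity, ?_⟩
  intro v hv hspos hsδ αv hαv hmax
  set δ : ℝ := (τ / 2) * ((κ / 2).toReal) ^ (1 / p) with hδdef
  set se : ℝ≥0∞ := ∑ α : A, eLpNorm (fun x => v x α) q μ with hsedef
  have hse_fin : se ≠ ∞ := by
    rw [hsedef]
    exact (ENNReal.sum_lt_top.2 fun α _ => (hv α).2).ne
  have hse_toReal : se.toReal = ∑ α : A, (eLpNorm (fun x => v x α) q μ).toReal :=
    ENNReal.toReal_sum fun α _ => (hv α).2.ne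
  have hse_le : se ≤ ENNReal.ofReal δ := by
    rw [← ENNReal.ofReal_toReal hse_fin]
    exact ENNReal.ofReal_le_ofReal (hse_toReal ▸ hsδ)
  -- measurable representatives for v
  set v' : A → (Fin n → ℝ) → ℝ := fun α => (hv α).1.mk _ with hv'def
  have hv'meas : ∀ α, Measurable (v' α) := fun α => (hv α).1.stronglyMeasurable_mk.measurable
  have hv'ae : ∀ᵐ x ∂μ, ∀ α, v x α = v' α x := ae_all_iff.2 fun α => (hv α).1.ae_eq_mk
  set W : (Fin n → ℝ) → ℝ := fun x => ∑ α : A, |v' α x| with hWdef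
  have hWmeas : Measurable W := Finset.measurable_sum _ fun α _ => (hv'meas α).abs
  have hWnorm : eLpNorm W q μ ≤ se := by
    have h1 : W =ᵐ[μ] fun x => ∑ α : A, |v x α| := by
      filter_upwards [hv'ae] with x hx
      simp only [hWdef]
      exact Finset.sum_congr rfl fun α _ => by rw [hx α]
    rw [eLpNorm_congr_ae h1]
    have h2 : (fun x => ∑ α : A, |v x α|) = ∑ α : A, fun x => |v x α| := by
      ext x; simp
    rw [h2]
    refine le_trans (eLpNorm_sum_le (fun α _ => ((hv α).1.norm.congr ?_)) hq1) ?_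
    · filter_upwards with x using (Real.norm_eq_abs _).symm
    · apply Finset.sum_le_sum
      intro α _
      rw [← eLpNorm_norm (fun x => v x α)]
      apply le_of_eq
      apply eLpNorm_congr_ae
      filter_upwards with x using (Real.norm_eq_abs _).symm
  -- Chebyshev set
  set T : Set (Fin n → ℝ) := {x | ENNReal.ofReal (τ / 2) ≤ (‖W x‖₊ : ℝ≥0∞)} with hTdef
  have hTmeas : MeasurableSet T := by
    apply measurableSet_le measurable_const
    exact (hWmeas.nnnorm.coe_nnreal_ennreal)
  have hτ2 : ENNReal.ofReal (τ / 2) ≠ 0 := by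
    simp only [ne_eq, ENNReal.ofReal_eq_zero, not_le]; positivity
  have hτ2top : ENNReal.ofReal (τ / 2) ≠ ∞ := ENNReal.ofReal_ne_top
  have hTκ : μ T ≤ κ / 2 := by
    have hcheb := meas_ge_le_mul_pow_eLpNorm_enorm μ hq0 hqtop
      hWmeas.aestronglyMeasurable (ε := ENNReal.ofReal (τ / 2)) hτ2 (fun h => absurd h hτ2top)
    rw [hqt] at hcheb
    have h1 : eLpNorm W q μ ^ p ≤ (ENNReal.ofReal δ) ^ p :=
      ENNReal.rpow_le_rpow (hWnorm.trans hse_le) hp0.le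
    have h2 : μ T ≤ (ENNReal.ofReal (τ / 2))⁻¹ ^ p * (ENNReal.ofReal δ) ^ p :=
      hcheb.trans (mul_le_mul_right h1 _)
    have h3 : ENNReal.ofReal δ
        = ENNReal.ofReal (τ / 2) * (κ / 2) ^ (1 / p) := by
      rw [hδdef, ENNReal.ofReal_mul (by positivity), ← ENNReal.ofReal_rpow_of_pos hκ2tR,
        ENNReal.ofReal_toReal hκ2top]
    rw [h3] at h2
    calc μ T ≤ (ENNReal.ofReal (τ / 2))⁻¹ ^ p
          * (ENNReal.ofReal (τ / 2) * (κ / 2) ^ (1 / p)) ^ p := h2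
      _ = κ / 2 := by
          rw [ENNReal.mul_rpow_of_nonneg _ _ hp0.le, ← mul_assoc,
            ← ENNReal.mul_rpow_of_nonneg _ _ hp0.le,
            ENNReal.inv_mul_cancel hτ2 hτ2top, ENNReal.one_rpow, one_mul,
            one_div, ENNReal.rpow_inv_rpow hp0.ne']
  set S : Set (Fin n → ℝ) := Eτ ∪ T with hSdef
  have hSmeas : MeasurableSet S := hEmeas.union hTmeas
  have hSκ : μ S ≤ κ := by
    calc μ S ≤ μ Eτ + μ T := measure_union_le _ _
      _ ≤ κ / 2 + κ / 2 := add_le_add hEκ hTκ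
      _ = κ := ENNReal.add_halves κ
  -- the function
  set expr : (Fin n → ℝ) → ℝ :=
    fun x => (⨆ α : A, (u x α + v x α)) - (⨆ α : A, u x α) - v x (αv x) with hexprdef
  have hexpr'meas : Measurable (fun x =>
      (⨆ α : A, (u' α x + v' α x)) - (⨆ α : A, u' α x)
        - ∑ α : A, if αv x = α then v' α x else 0) := by
    apply Measurable.sub
    apply Measurable.sub
    · exact stmt9_meas_ciSup fun α => (hu'meas α).add (hv'meas α)
    · exact stmt9_meas_ciSup hu'meas
    · apply Finset.measurable_sum
      intro α _
      exact Measurable.ite (hαv (measurableSet_singleton α)) (hv'meas α) measurable_const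
  have hee : expr =ᵐ[μ] (fun x =>
      (⨆ α : A, (u' α x + v' α x)) - (⨆ α : A, u' α x)
        - ∑ α : A, if αv x = α then v' α x else 0) := by
    filter_upwards [hu'ae, hv'ae] with x h1 h2
    have e1 : (⨆ α : A, (u x α + v x α)) = ⨆ α : A, (u' α x + v' α x) := by
      congr 1; ext α; rw [h1 α, h2 α]
    have e2 : (⨆ α : A, u x α) = ⨆ α : A, u' α x := by
      congr 1; ext α; rw [h1 α]
    have e3 : v x (αv x) = ∑ α : A, if αv x = α then v' α x else 0 := by
      rw [Finset.sum_ite_eq Finset.univ (αv x) (fun α => v' α x) |>.trans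
        (if_pos (Finset.mem_univ _)), h2 (αv x)]
    simp only [hexprdef, e1, e2, e3]
  have hexprmeas : AEStronglyMeasurable expr μ :=
    (hexpr'meas.stronglyMeasurable.aestronglyMeasurable).congr hee.symm
  -- pointwise facts
  have hptwise : ∀ᵐ x ∂μ, |expr x| ≤ 2 * W x ∧ (expr x ≠ 0 → x ∈ S) := by
    filter_upwards [hu'ae, hv'ae, hmax] with x h1 h2 h3
    obtain ⟨heq, β, hβ, hβ0, hβle⟩ :=
      stmt9_key_pt (fun α => u x α) (fun α => v x α) (αv x) h3
    have hWx : (∑ α : A, |v x α|) = W x := by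
      simp only [hWdef]
      exact Finset.sum_congr rfl fun α _ => by rw [h2 α]
    have hexprx : expr x = u x (αv x) - ⨆ α : A, u x α := heq
    have habsx : |expr x| = (⨆ α : A, u x α) - u x (αv x) := by
      rw [hexprx, abs_sub_comm, abs_of_nonneg (by rw [← hβ]; linarith)]
    constructor
    · rw [habsx, ← hβ, ← hWx]
      exact hβle.trans (le_of_eq rfl)
    · intro hne
      have hgap : 0 < u x β - u x (αv x) := by
        rcases lt_or_eq_of_le hβ0 with h | h
        · exact h
        · exfalso; apply hne; rw [hexprx, ← hβ]; linarith
      by_contra hxS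
      simp only [hSdef, Set.mem_union, not_or] at hxS
      obtain ⟨hxE, hxT⟩ := hxS
      -- from x ∉ T : W x < τ / 2
      have hWlt : 2 * W x < τ := by
        by_contra hcon
        push_neg at hcon
        apply hxT
        simp only [hTdef, Set.mem_setOf_eq]
        change ENNReal.ofReal (τ / 2) ≤ ‖W x‖ₑ
        rw [← ofReal_norm_eq_enorm]
        apply ENNReal.ofReal_le_ofReal
        rw [Real.norm_eq_abs]
        calc τ / 2 ≤ W x := by linarith
          _ ≤ |W x| := le_abs_self _
      -- so the pair (αv x, β) witnesses x ∈ Eτ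
      apply hxE
      simp only [hEdef, Set.mem_iUnion]
      refine ⟨(αv x, β), ?_, ?_⟩
      · simp only [hDdef, Set.mem_setOf_eq] at *
        rw [← h1 (αv x), ← h1 β]
        linarith
      · rw [← h1 (αv x), ← h1 β]
        calc u x β - u x (αv x) ≤ 2 * ∑ α : A, |v x α| := hβle
          _ = 2 * W x := by rw [hWx]
          _ ≤ 1 / ((k0 : ℝ) + 1) := by rw [← hτdef]; linarith
  -- main norm estimate in ℝ≥0∞
  have hmain : eLpNorm expr 2 μ ≤ ENNReal.ofReal ε * se := by
    have hind : expr =ᵐ[μ] S.indicator expr := by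
      filter_upwards [hptwise] with x hx
      by_cases hxS : x ∈ S
      · rw [Set.indicator_of_mem hxS]
      · rw [Set.indicator_of_notMem hxS]
        by_contra hne
        exact hxS (hx.2 hne)
    have step1 : eLpNorm expr 2 μ = eLpNorm expr 2 (μ.restrict S) := by
      rw [eLpNorm_congr_ae hind, eLpNorm_indicator_eq_eLpNorm_restrict hSmeas]
    have step2 : eLpNorm expr 2 (μ.restrict S)
        ≤ eLpNorm expr q (μ.restrict S) * (μ S) ^ c := by
      have := eLpNorm_le_eLpNorm_mul_rpow_measure_univ (p := 2) (q := q) hq2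
        (hexprmeas.restrict (s := S))
      rwa [Measure.restrict_apply_univ, hqt,
        show (2 : ℝ≥0∞).toReal = (2 : ℝ) by simp, ← hcdef] at this
    have step3 : eLpNorm expr q (μ.restrict S) ≤ 2 * se := by
      have hb : eLpNorm expr q (μ.restrict S) ≤ eLpNorm (fun x => 2 * W x) q (μ.restrict S) := by
        apply eLpNorm_mono_ae
        apply ae_restrict_of_ae
        filter_upwards [hptwise] with x hx
        rw [Real.norm_eq_abs, Real.norm_eq_abs]
        refine hx.1.trans (le_abs_self _)
      refine hb.trans ?_
      refine le_trans (eLpNorm_mono_measure _ Measure.restrict_le_self) ?_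
      have h2W : (fun x => 2 * W x) = W + W := by ext x; simp [two_mul]
      rw [h2W]
      calc eLpNorm (W + W) q μ ≤ eLpNorm W q μ + eLpNorm W q μ :=
            eLpNorm_add_le hWmeas.aestronglyMeasurable hWmeas.aestronglyMeasurable hq1
        _ ≤ se + se := add_le_add hWnorm hWnorm
        _ = 2 * se := (two_mul se).symm
    have step4 : (μ S) ^ c ≤ ENNReal.ofReal (ε / 2) := by
      calc (μ S) ^ c ≤ κ ^ c := ENNReal.rpow_le_rpow hSκ hc0.le
        _ = ENNReal.ofReal (ε / 2) := by
            rw [hκdef, ← ENNReal.rpow_mul, inv_mul_cancel₀ hc0.ne', ENNReal.rpow_one]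
    calc eLpNorm expr 2 μ ≤ eLpNorm expr q (μ.restrict S) * (μ S) ^ c := by
          rw [step1]; exact step2
      _ ≤ (2 * se) * ENNReal.ofReal (ε / 2) := mul_le_mul' step3 step4
      _ = (2 * ENNReal.ofReal (ε / 2)) * se := by ring
      _ = ENNReal.ofReal ε * se := by
          rw [show (2 : ℝ≥0∞) = ENNReal.ofReal 2 by simp, ← ENNReal.ofReal_mul (by norm_num)]
          congr 1
          ring
  -- conclude in ℝ
  have hfin : ENNReal.ofReal ε * se ≠ ∞ := ENNReal.mul_ne_top ENNReal.ofReal_ne_top hse_fin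
  have := ENNReal.toReal_mono hfin hmain
  rwa [ENNReal.toReal_mul, ENNReal.toReal_ofReal hε.le, hse_toReal] at this
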